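/- Let P ⊆ ℝ^d be a finite β-stable instance for k-means, and let {C_1,…,C_k} be a partition of P with centroids a_1,…,a_k whose k-means cost is at most (1+β/2)·OPT_k. Let S ⊂ ℝ^d be a set of k centers and x ∈ S, and let I(x) be the set of clusters C_j such that cost(a_j,x) ≥ 32·Δ_j and cost(a_j,x) ≤ 16·cost(a_j,S), where Δ_j := cost(C_j,a_j)/|C_j|. Then cost(P,S) ≥ (1/768)·(|I(x)| − 1)·β·OPT_k. -/

import Mathlib

open Finset

noncomputable section

/-- `ℝ^d` as a Euclidean space. -/
abbrev Pt (d : ℕ) := EuclideanSpace ℝ (Fin d)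

/-- `cost(p,S) = min_{s ∈ S} ‖p - s‖²`. -/
noncomputable def pcost {d : ℕ} (p : Pt d) (S : Finset (Pt d)) : ℝ :=
  sInf ((fun s => ‖p - s‖ ^ 2) '' (S : Set (Pt d)))

/-- `cost(P,S) = ∑_{p ∈ P} min_{s ∈ S} ‖p - s‖²`. -/
noncomputable def scost {d : ℕ} (P S : Finset (Pt d)) : ℝ :=
  ∑ p ∈ P, pcost p S

/-- `OPT_j`: the optimal k-means cost of `P` with `j` centers. -/
noncomputable def kmOPT {d : ℕ} (P : Finset (Pt d)) (j : ℕ) : ℝ :=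
  sInf ((fun S : Finset (Pt d) => scost P S) '' {S : Finset (Pt d) | S.card = j})

lemma pcost_nonneg {d : ℕ} (p : Pt d) (S : Finset (Pt d)) : 0 ≤ pcost p S := by
  apply Real.sInf_nonneg
  rintro y ⟨s, -, rfl⟩
  positivity

lemma pcost_bddBelow {d : ℕ} (p : Pt d) (S : Finset (Pt d)) :
    BddBelow ((fun s => ‖p - s‖ ^ 2) '' (S : Set (Pt d))) := by
  refine ⟨0, ?_⟩
  rintro y ⟨s, -, rfl⟩
  positivity

lemma pcost_le {d : ℕ} {p s : Pt d} {S : Finset (Pt d)} (hs : s ∈ S) :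
    pcost p S ≤ ‖p - s‖ ^ 2 :=
  csInf_le (pcost_bddBelow p S) ⟨s, by simpa using hs, rfl⟩

lemma le_pcost {d : ℕ} {p : Pt d} {S : Finset (Pt d)} {c : ℝ} (hS : S.Nonempty)
    (h : ∀ s ∈ S, c ≤ ‖p - s‖ ^ 2) : c ≤ pcost p S := by
  apply le_csInf
  · exact ⟨_, ⟨hS.choose, by simpa using hS.choose_spec, rfl⟩⟩
  · rintro y ⟨s, hs, rfl⟩
    exact h s (by simpa using hs)

lemma pcost_mono {d : ℕ} (p : Pt d) {T T' : Finset (Pt d)} (h : T ⊆ T') (hT : T.Nonempty) :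
    pcost p T' ≤ pcost p T := by
  apply csInf_le_csInf (pcost_bddBelow p T')
  · exact ⟨_, ⟨hT.choose, by simpa using hT.choose_spec, rfl⟩⟩
  · exact Set.image_mono (by exact_mod_cast h)

lemma scost_nonneg {d : ℕ} (P S : Finset (Pt d)) : 0 ≤ scost P S :=
  Finset.sum_nonneg fun p _ => pcost_nonneg p S

lemma kmOPT_nonneg {d : ℕ} (P : Finset (Pt d)) (j : ℕ) : 0 ≤ kmOPT P j := by
  apply Real.sInf_nonneg
  rintro y ⟨T, -, rfl⟩
  exact scost_nonneg P T

lemma kmOPT_le {d : ℕ} (P : Finset (Pt d)) {j : ℕ} {T : Finset (Pt d)} (h : T.card = j) :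
    kmOPT P j ≤ scost P T := by
  apply csInf_le
  · refine ⟨0, ?_⟩
    rintro y ⟨T', -, rfl⟩
    exact scost_nonneg P T'
  · exact ⟨T, h, rfl⟩

/-- bias-variance decomposition around a point with zero centered sum. -/
lemma sum_dist_sq_centroid {d : ℕ} (C : Finset (Pt d)) (av x : Pt d)
    (h : ∑ p ∈ C, (p - av) = 0) :
    ∑ p ∈ C, ‖p - x‖ ^ 2 = (∑ p ∈ C, ‖p - av‖ ^ 2) + (C.card : ℝ) * ‖av - x‖ ^ 2 := by
  have key : ∀ p : Pt d, ‖p - x‖ ^ 2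
      = ‖p - av‖ ^ 2 + 2 * (inner ℝ (p - av) (av - x) : ℝ) + ‖av - x‖ ^ 2 := by
    intro p
    have hp : p - x = (p - av) + (av - x) := by abel
    rw [hp, norm_add_sq_real]
  rw [Finset.sum_congr rfl fun p _ => key p]
  rw [Finset.sum_add_distrib, Finset.sum_add_distrib]
  have h2 : ∑ p ∈ C, 2 * (inner ℝ (p - av) (av - x) : ℝ) = 0 := by
    rw [← Finset.mul_sum, ← sum_inner, h]
    simp
  rw [h2, Finset.sum_const, nsmul_eq_mul]
  ring

lemma sq_norm_triangle {d : ℕ} (a p s : Pt d) :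
    ‖a - s‖ ^ 2 ≤ 3 / 2 * ‖p - a‖ ^ 2 + 3 * ‖p - s‖ ^ 2 := by
  have h : ‖a - s‖ ≤ ‖a - p‖ + ‖p - s‖ := norm_sub_le_norm_sub_add_norm_sub a p s
  have h1 : ‖a - p‖ = ‖p - a‖ := norm_sub_rev a p
  have h2 : 0 ≤ ‖a - s‖ := norm_nonneg _
  have h3 : 0 ≤ ‖p - a‖ := norm_nonneg _
  have h4 : 0 ≤ ‖p - s‖ := norm_nonneg _
  nlinarith [sq_nonneg (‖p - a‖ - 2 * ‖p - s‖)]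

/-- For a β-stable instance, if a center `x ∈ S` interacts with many clusters
then `cost(P,S)` is large. -/
theorem stable_interaction_cost
    {d : ℕ} (k : ℕ) (β : ℝ) (P : Finset (Pt d)) (cl : Pt d → Fin k)
    (S : Finset (Pt d)) (x : Pt d)
    (hβ : 0 < β)
    (hstable : kmOPT P k * (1 + β) ≤ kmOPT P (k - 1))
    (hS : S.card = k) (hx : x ∈ S) :
    -- the clusters of the partition, their centroids and their average costs
    let Cj : Fin k → Finset (Pt d) := fun j => P.filter fun p => cl p = j
    let a : Fin k → Pt d := fun j => (((Cj j).card : ℝ))⁻¹ • ∑ p ∈ Cj j, p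
    let Δ : Fin k → ℝ := fun j => (∑ p ∈ Cj j, ‖p - a j‖ ^ 2) / ((Cj j).card : ℝ)
    -- the clustering is a (1+β/2)-approximation
    (∑ j : Fin k, ∑ p ∈ Cj j, ‖p - a j‖ ^ 2) ≤ (1 + β / 2) * kmOPT P k →
    -- `I(x)`: the clusters interacting with `x`
    let I : Finset (Fin k) := Finset.univ.filter fun j =>
      32 * Δ j ≤ ‖a j - x‖ ^ 2 ∧ ‖a j - x‖ ^ 2 ≤ 16 * pcost (a j) S
    (1 / 768 : ℝ) * ((I.card : ℝ) - 1) * β * kmOPT P k ≤ scost P S := by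
  intro Cj a Δ happrox I
  classical
  have hOPTnn : 0 ≤ kmOPT P k := kmOPT_nonneg P k
  by_cases hI : I.card ≤ 1
  · -- trivial case: LHS ≤ 0 ≤ RHS
    have h1 : ((I.card : ℝ) - 1) ≤ 0 := by
      have : (I.card : ℝ) ≤ 1 := by exact_mod_cast hI
      linarith
    have hA : (1 / 768 : ℝ) * ((I.card : ℝ) - 1) * β ≤ 0 := by nlinarith
    have : (1 / 768 : ℝ) * ((I.card : ℝ) - 1) * β * kmOPT P k ≤ 0 := by
      calc (1 / 768 : ℝ) * ((I.card : ℝ) - 1) * β * kmOPT P k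
          ≤ 0 * kmOPT P k := mul_le_mul_of_nonneg_right hA hOPTnn
        _ = 0 := by ring
    exact this.trans (scost_nonneg P S)
  push_neg at hI
  have hI2 : 2 ≤ I.card := hI
  have hk2 : 2 ≤ k := by
    have := I.card_le_univ
    simpa using le_trans hI2 (by simpa using this)
  -- Pt d is infinite since S contains two distinct points
  have hS2 : 1 < S.card := by omega
  obtain ⟨u, hu, v, hv, huv⟩ := Finset.one_lt_card.mp hS2
  have hinf : Infinite (Pt d) := by
    have hw : v - u ≠ 0 := sub_ne_zero.mpr huv.symm
    exact Infinite.of_injective (fun n : ℕ => (n : ℝ) • (v - u))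
      fun m n h => Nat.cast_injective (smul_left_injective ℝ hw h)
  have hSne : S.Nonempty := ⟨x, hx⟩
  -- centered sums vanish
  have hsum0 : ∀ j : Fin k, ∑ p ∈ Cj j, (p - a j) = 0 := by
    intro j
    rcases eq_or_ne ((Cj j).card) 0 with h0 | h0
    · have he : Cj j = ∅ := Finset.card_eq_zero.mp h0
      simp [he]
    · have hc : ((Cj j).card : ℝ) ≠ 0 := Nat.cast_ne_zero.mpr h0
      have hv : ∑ p ∈ Cj j, p = ((Cj j).card : ℝ) • a j := by
        show _ = ((Cj j).card : ℝ) • ((((Cj j).card : ℝ))⁻¹ • ∑ p ∈ Cj j, p)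
        rw [smul_inv_smul₀ hc]
      rw [Finset.sum_sub_distrib, hv, Finset.sum_const, ← Nat.cast_smul_eq_nsmul ℝ, sub_self]
  -- choose the cluster of I with minimal |C_j|·‖a_j - x‖²
  have hIne : I.Nonempty := Finset.card_pos.mp (by omega)
  obtain ⟨j0, hj0, hmin⟩ :=
    I.exists_min_image (fun j => ((Cj j).card : ℝ) * ‖a j - x‖ ^ 2) hIne
  -- Step 1: every other interacting cluster is expensive
  have step1 : ∀ j ∈ I, j ≠ j0 →
      β / 4 * kmOPT P k ≤ ((Cj j).card : ℝ) * ‖a j - x‖ ^ 2 := by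
    intro j hj hne
    set T0 : Finset (Pt d) := insert x ((((univ : Finset (Fin k)).erase j).erase j0).image a)
      with hT0
    have hcardT0 : T0.card ≤ k - 1 := by
      have h1 : (((univ : Finset (Fin k)).erase j).erase j0).card = k - 2 := by
        rw [Finset.card_erase_of_mem (Finset.mem_erase.mpr ⟨hne.symm, Finset.mem_univ _⟩),
          Finset.card_erase_of_mem (Finset.mem_univ _)]
        simp only [Finset.card_univ, Fintype.card_fin]
        omega
      calc T0.card ≤ ((((univ : Finset (Fin k)).erase j).erase j0).image a).card + 1 :=
            Finset.card_insert_le _ _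
        _ ≤ (k - 2) + 1 := by
            have := Finset.card_image_le
              (s := (((univ : Finset (Fin k)).erase j).erase j0)) (f := a)
            omega
        _ ≤ k - 1 := by omega
    obtain ⟨T', hTsub, hTcard⟩ := Infinite.exists_superset_card_eq T0 (k - 1) hcardT0
    have h2 : kmOPT P (k - 1) ≤ scost P T' := kmOPT_le P hTcard
    have h3 : scost P T' ≤ scost P T0 :=
      Finset.sum_le_sum fun p _ => pcost_mono p hTsub ⟨x, Finset.mem_insert_self _ _⟩
    have h4 : scost P T0 ≤ (∑ i : Fin k, ∑ p ∈ Cj i, ‖p - a i‖ ^ 2)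
        + ((Cj j).card : ℝ) * ‖a j - x‖ ^ 2 + ((Cj j0).card : ℝ) * ‖a j0 - x‖ ^ 2 := by
      have hfib : scost P T0 = ∑ i : Fin k, ∑ p ∈ Cj i, pcost p T0 :=
        (Finset.sum_fiberwise P cl (fun p => pcost p T0)).symm
      rw [hfib]
      have hbound : ∀ i : Fin k, (∑ p ∈ Cj i, pcost p T0)
          ≤ (∑ p ∈ Cj i, ‖p - a i‖ ^ 2)
            + (if i = j then ((Cj i).card : ℝ) * ‖a i - x‖ ^ 2 else 0)
            + (if i = j0 then ((Cj i).card : ℝ) * ‖a i - x‖ ^ 2 else 0) := by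
        intro i
        by_cases hij : i = j
        · subst hij
          have : (∑ p ∈ Cj i, pcost p T0) ≤ ∑ p ∈ Cj i, ‖p - x‖ ^ 2 :=
            Finset.sum_le_sum fun p _ => pcost_le (Finset.mem_insert_self _ _)
          rw [if_pos rfl, if_neg hne]
          rw [sum_dist_sq_centroid (Cj i) (a i) x (hsum0 i)] at this
          linarith
        · by_cases hij0 : i = j0
          · subst hij0
            have : (∑ p ∈ Cj i, pcost p T0) ≤ ∑ p ∈ Cj i, ‖p - x‖ ^ 2 :=
              Finset.sum_le_sum fun p _ => pcost_le (Finset.mem_insert_self _ _)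
            rw [if_neg hij, if_pos rfl]
            rw [sum_dist_sq_centroid (Cj i) (a i) x (hsum0 i)] at this
            linarith
          · have hmem : a i ∈ T0 := by
              apply Finset.mem_insert_of_mem
              exact Finset.mem_image_of_mem a
                (Finset.mem_erase.mpr ⟨hij0, Finset.mem_erase.mpr ⟨hij, Finset.mem_univ _⟩⟩)
            have : (∑ p ∈ Cj i, pcost p T0) ≤ ∑ p ∈ Cj i, ‖p - a i‖ ^ 2 :=
              Finset.sum_le_sum fun p _ => pcost_le hmem
            rw [if_neg hij, if_neg hij0]
            linarith
      calc (∑ i : Fin k, ∑ p ∈ Cj i, pcost p T0)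
          ≤ ∑ i : Fin k, ((∑ p ∈ Cj i, ‖p - a i‖ ^ 2)
            + (if i = j then ((Cj i).card : ℝ) * ‖a i - x‖ ^ 2 else 0)
            + (if i = j0 then ((Cj i).card : ℝ) * ‖a i - x‖ ^ 2 else 0)) :=
            Finset.sum_le_sum fun i _ => hbound i
        _ = _ := by
            rw [Finset.sum_add_distrib, Finset.sum_add_distrib,
              Finset.sum_ite_eq' univ j (fun i => ((Cj i).card : ℝ) * ‖a i - x‖ ^ 2),
              Finset.sum_ite_eq' univ j0 (fun i => ((Cj i).card : ℝ) * ‖a i - x‖ ^ 2)]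
            simp
    have h6 : ((Cj j0).card : ℝ) * ‖a j0 - x‖ ^ 2 ≤ ((Cj j).card : ℝ) * ‖a j - x‖ ^ 2 :=
      hmin j hj
    nlinarith [hstable, h2, h3, h4, happrox]
  -- Step 2: interacting clusters are far from S
  have step2 : ∀ j ∈ I,
      ((Cj j).card : ℝ) * ‖a j - x‖ ^ 2 / 192 ≤ ∑ p ∈ Cj j, pcost p S := by
    intro j hj
    obtain ⟨h32, h16⟩ := (Finset.mem_filter.mp hj).2
    have hpc : ‖a j - x‖ ^ 2 / 16 ≤ pcost (a j) S := by linarith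
    set c : ℝ := ((Cj j).card : ℝ) with hc
    have hcnn : 0 ≤ c := Nat.cast_nonneg _
    have hΔsum : ∑ p ∈ Cj j, ‖p - a j‖ ^ 2 ≤ c * ‖a j - x‖ ^ 2 / 32 := by
      rcases (Cj j).eq_empty_or_nonempty with he | hne
      · simp only [he, Finset.sum_empty]
        have : 0 ≤ ‖a j - x‖ ^ 2 := sq_nonneg _
        have hc0 : c = 0 := by simp [hc, he]
        rw [hc0]; ring_nf; simp
      · have hcpos : 0 < c := by
          simp only [hc]
          exact_mod_cast Finset.card_pos.mpr hne
        have hΔ : Δ j = (∑ p ∈ Cj j, ‖p - a j‖ ^ 2) / c := rfl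
        have h1 : (∑ p ∈ Cj j, ‖p - a j‖ ^ 2) / c ≤ ‖a j - x‖ ^ 2 / 32 := by
          rw [← hΔ]; linarith
        have := (div_le_iff₀ hcpos).mp h1
        calc ∑ p ∈ Cj j, ‖p - a j‖ ^ 2 ≤ ‖a j - x‖ ^ 2 / 32 * c := this
          _ = c * ‖a j - x‖ ^ 2 / 32 := by ring
    have hper : ∀ p ∈ Cj j, pcost (a j) S / 3 - ‖p - a j‖ ^ 2 / 2 ≤ pcost p S := by
      intro p _
      apply le_pcost hSne
      intro s hs
      have h1 : pcost (a j) S ≤ ‖a j - s‖ ^ 2 := pcost_le hs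
      have h2 := sq_norm_triangle (a j) p s
      linarith
    have hsum : ∑ p ∈ Cj j, (pcost (a j) S / 3 - ‖p - a j‖ ^ 2 / 2)
        ≤ ∑ p ∈ Cj j, pcost p S := Finset.sum_le_sum hper
    rw [Finset.sum_sub_distrib, Finset.sum_const, nsmul_eq_mul, ← Finset.sum_div] at hsum
    have hmul : c * (‖a j - x‖ ^ 2 / 16) ≤ c * pcost (a j) S :=
      mul_le_mul_of_nonneg_left hpc hcnn
    calc c * ‖a j - x‖ ^ 2 / 192
        ≤ c * (pcost (a j) S / 3) - (∑ p ∈ Cj j, ‖p - a j‖ ^ 2) / 2 := by nlinarith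
      _ ≤ ∑ p ∈ Cj j, pcost p S := hsum
  -- combine
  have hfibS : scost P S = ∑ i : Fin k, ∑ p ∈ Cj i, pcost p S :=
    (Finset.sum_fiberwise P cl (fun p => pcost p S)).symm
  have hsub : ∑ j ∈ I.erase j0, ∑ p ∈ Cj j, pcost p S ≤ scost P S := by
    rw [hfibS]
    exact Finset.sum_le_sum_of_subset_of_nonneg (Finset.subset_univ _)
      fun i _ _ => Finset.sum_nonneg fun p _ => pcost_nonneg p S
  have hlow : ∀ j ∈ I.erase j0, β / 4 * kmOPT P k / 192 ≤ ∑ p ∈ Cj j, pcost p S := by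
    intro j hj
    obtain ⟨hne, hjI⟩ := Finset.mem_erase.mp hj
    have h1 := step1 j hjI hne
    have h2 := step2 j hjI
    calc β / 4 * kmOPT P k / 192 ≤ ((Cj j).card : ℝ) * ‖a j - x‖ ^ 2 / 192 := by linarith
      _ ≤ _ := h2
  have hcardsum : ((I.erase j0).card : ℝ) * (β / 4 * kmOPT P k / 192)
      ≤ ∑ j ∈ I.erase j0, ∑ p ∈ Cj j, pcost p S := by
    have := Finset.card_nsmul_le_sum (I.erase j0)
      (fun j => ∑ p ∈ Cj j, pcost p S) (β / 4 * kmOPT P k / 192) hlow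
    simpa [nsmul_eq_mul] using this
  have hcerase : ((I.erase j0).card : ℝ) = (I.card : ℝ) - 1 := by
    rw [Finset.card_erase_of_mem hj0]
    have h1 : 1 ≤ I.card := by omega
    push_cast [Nat.cast_sub h1]
    ring
  calc (1 / 768 : ℝ) * ((I.card : ℝ) - 1) * β * kmOPT P k
      = ((I.erase j0).card : ℝ) * (β / 4 * kmOPT P k / 192) := by rw [hcerase]; ring
    _ ≤ ∑ j ∈ I.erase j0, ∑ p ∈ Cj j, pcost p S := hcardsum
    _ ≤ scost P S := hsub
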